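/- Adding a training point never increases the Gaussian process posterior variance: for a symmetric positive-semidefinite kernel k on ℝ^d, noise variance σ_n² > 0, training inputs x^(1),…,x^(N) and an additional input x^(N+1), for every x ∈ ℝ^d one has σ_{N+1}²(x) ≤ σ_N²(x), where σ_N²(x) is the posterior variance computed from the first N inputs and σ_{N+1}²(x) the posterior variance computed from all N+1 inputs. -/

import Mathlib

open Matrix

private lemma gp_aux {n : ℕ} (A : Matrix (Fin n) (Fin n) ℝ) (hA : A.PosDef)
    (v : Fin n → ℝ) (w : Fin n → ℝ) :
    2 * (w ⬝ᵥ v) - w ⬝ᵥ (A *ᵥ w) ≤ v ⬝ᵥ (A⁻¹ *ᵥ v) := by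
  have hInv : A * A⁻¹ = 1 := mul_nonsing_inv A (isUnit_iff_isUnit_det A |>.mp hA.isUnit)
  set u : Fin n → ℝ := A⁻¹ *ᵥ v with hu
  have hAu : A *ᵥ u = v := by
    rw [hu, mulVec_mulVec, hInv, one_mulVec]
  have hsym : Aᵀ = A := hA.isHermitian
  have h0 : 0 ≤ (u - w) ⬝ᵥ (A *ᵥ (u - w)) := by
    have := hA.posSemidef.dotProduct_mulVec_nonneg (u - w)
    simpa using this
  have hwAu : w ⬝ᵥ (A *ᵥ u) = w ⬝ᵥ v := by rw [hAu]
  have huAw : u ⬝ᵥ (A *ᵥ w) = v ⬝ᵥ w := by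
    rw [dotProduct_mulVec, ← mulVec_transpose, hsym, hAu]
  have huAu : u ⬝ᵥ (A *ᵥ u) = v ⬝ᵥ u := by
    rw [hAu, dotProduct_comm]
  have hexp : (u - w) ⬝ᵥ (A *ᵥ (u - w))
      = v ⬝ᵥ u - v ⬝ᵥ w - w ⬝ᵥ v + w ⬝ᵥ (A *ᵥ w) := by
    rw [mulVec_sub, sub_dotProduct, dotProduct_sub, dotProduct_sub,
      huAu, huAw, hwAu]
    ring
  nlinarith [dotProduct_comm v w]

/-- Adding a training point never increases the GP posterior variance. -/
theorem gp_posterior_variance_monotone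
    (d N : ℕ)
    (X : Fin (N + 1) → EuclideanSpace ℝ (Fin d))
    (σn2 : ℝ) (hσ : 0 < σn2)
    (k : EuclideanSpace ℝ (Fin d) → EuclideanSpace ℝ (Fin d) → ℝ)
    (hsymm : ∀ x y, k x y = k y x)
    (hpsd : ∀ (m : ℕ) (z : Fin m → EuclideanSpace ℝ (Fin d)),
      (Matrix.of fun i j => k (z i) (z j)).PosSemidef)
    (x : EuclideanSpace ℝ (Fin d)) :
    letI X' : Fin N → EuclideanSpace ℝ (Fin d) := fun i => X i.castSucc
    letI KN : Matrix (Fin N) (Fin N) ℝ := Matrix.of fun i j => k (X' i) (X' j)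
    letI kN : Fin N → ℝ := fun i => k x (X' i)
    letI σ2N : ℝ := k x x - kN ⬝ᵥ ((KN + σn2 • (1 : Matrix (Fin N) (Fin N) ℝ))⁻¹ *ᵥ kN)
    letI KN1 : Matrix (Fin (N + 1)) (Fin (N + 1)) ℝ := Matrix.of fun i j => k (X i) (X j)
    letI kN1 : Fin (N + 1) → ℝ := fun i => k x (X i)
    letI σ2N1 : ℝ :=
      k x x - kN1 ⬝ᵥ ((KN1 + σn2 • (1 : Matrix (Fin (N + 1)) (Fin (N + 1)) ℝ))⁻¹ *ᵥ kN1)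
    σ2N1 ≤ σ2N := by
  set X' : Fin N → EuclideanSpace ℝ (Fin d) := fun i => X i.castSucc with hX'
  set KN : Matrix (Fin N) (Fin N) ℝ := Matrix.of fun i j => k (X' i) (X' j) with hKN
  set kN : Fin N → ℝ := fun i => k x (X' i) with hkN
  set KN1 : Matrix (Fin (N + 1)) (Fin (N + 1)) ℝ := Matrix.of fun i j => k (X i) (X j) with hKN1
  set kN1 : Fin (N + 1) → ℝ := fun i => k x (X i) with hkN1
  have hdiag : ∀ (m : ℕ), (σn2 • (1 : Matrix (Fin m) (Fin m) ℝ)).PosDef := by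
    intro m
    rw [smul_one_eq_diagonal]
    exact .diagonal fun _ => hσ
  have hA : (KN + σn2 • (1 : Matrix (Fin N) (Fin N) ℝ)).PosDef :=
    Matrix.PosDef.posSemidef_add (hpsd N X') (hdiag N)
  have hA1 : (KN1 + σn2 • (1 : Matrix (Fin (N+1)) (Fin (N+1)) ℝ)).PosDef :=
    Matrix.PosDef.posSemidef_add (hpsd (N+1) X) (hdiag (N+1))
  set A : Matrix (Fin N) (Fin N) ℝ := KN + σn2 • 1 with hAdef
  set A1 : Matrix (Fin (N+1)) (Fin (N+1)) ℝ := KN1 + σn2 • 1 with hA1def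
  have hAinv : A * A⁻¹ = 1 := mul_nonsing_inv A (isUnit_iff_isUnit_det A |>.mp hA.isUnit)
  set w : Fin N → ℝ := A⁻¹ *ᵥ kN with hw
  have hAw : A *ᵥ w = kN := by rw [hw, mulVec_mulVec, hAinv, one_mulVec]
  set e : Fin (N+1) → ℝ := Fin.snoc w 0 with he
  have hcast : ∀ i j : Fin N, A1 i.castSucc j.castSucc = A i j := by
    intro i j
    simp only [hAdef, hA1def, Matrix.add_apply, Matrix.smul_apply, Matrix.one_apply,
      Fin.castSucc_inj, Matrix.of_apply]
    rfl
  -- A1 *ᵥ e at castSucc indices equals kN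
  have hA1e : ∀ i : Fin N, (A1 *ᵥ e) i.castSucc = kN i := by
    intro i
    have : (A1 *ᵥ e) i.castSucc = ∑ j : Fin (N+1), A1 i.castSucc j * e j := rfl
    rw [this, Fin.sum_univ_castSucc]
    simp only [he, Fin.snoc_castSucc, Fin.snoc_last, mul_zero, add_zero, hcast]
    rw [← hAw]
    rfl
  have hekN1 : e ⬝ᵥ kN1 = w ⬝ᵥ kN := by
    rw [dotProduct, Fin.sum_univ_castSucc]
    simp only [he, Fin.snoc_castSucc, Fin.snoc_last, zero_mul, add_zero]
    rfl
  have heA1e : e ⬝ᵥ (A1 *ᵥ e) = w ⬝ᵥ kN := by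
    rw [dotProduct, Fin.sum_univ_castSucc]
    simp only [he, Fin.snoc_castSucc, Fin.snoc_last, zero_mul, add_zero]
    exact Finset.sum_congr rfl fun i _ => by rw [hA1e]
  have key : kN ⬝ᵥ (A⁻¹ *ᵥ kN) ≤ kN1 ⬝ᵥ (A1⁻¹ *ᵥ kN1) := by
    have h := gp_aux A1 hA1 kN1 e
    rw [hekN1, heA1e] at h
    have hwkN : w ⬝ᵥ kN = kN ⬝ᵥ (A⁻¹ *ᵥ kN) := by rw [hw, dotProduct_comm]
    linarith [hwkN ▸ h]
  exact sub_le_sub_left key _
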